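/- Let ρ > 0, μ > 0, κ > 0, let p_DS* be the unique minimizer of θ_{ρ,μ,κ}, and set E := θ_{ρ,μ}(0) − θ_{ρ,μ}(p_DS*). If p ∈ ℝ^m and t ≥ 0 satisfy θ_{ρ,μ,κ}(p) − θ_{ρ,μ,κ}(p_DS*) ≤ E·e^{−t} and ‖p − p_DS*‖² ≤ min{‖p_DS*‖², (2/κ)·E·e^{−t}}, then θ_{ρ,μ}(p) − θ_{ρ,μ}(p_DS*) ≤ (25/8)·E·e^{−t/2}. -/

import Mathlib

open scoped RealInnerProductSpace
noncomputable section

/-- `Euc k` is the Euclidean space `ℝ^k`. -/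
abbrev Euc (k : ℕ) := EuclideanSpace ℝ (Fin k)

/-- `f` is proper: nowhere `-∞` and somewhere finite. -/
def IsProperFn {k : ℕ} (f : Euc k → EReal) : Prop :=
  (∀ x, f x ≠ ⊥) ∧ ∃ x, f x ≠ ⊤

/-- Convexity of an extended-real-valued function. -/
def IsConvexFn {k : ℕ} (f : Euc k → EReal) : Prop :=
  ∀ x y : Euc k, ∀ t : ℝ, 0 < t → t < 1 →
    f (t • x + (1 - t) • y) ≤ (t : EReal) * f x + ((1 - t : ℝ) : EReal) * f y

/-- `f` is proper, convex, lower semicontinuous with bounded effective domain. -/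
def NiceFn {k : ℕ} (f : Euc k → EReal) : Prop :=
  IsProperFn f ∧ IsConvexFn f ∧ LowerSemicontinuous f ∧
    Bornology.IsBounded {x | f x ≠ ⊤}

/-- The Fenchel conjugate `f*(q) = sup_x {⟨q,x⟩ - f(x)}` (real-valued). -/
noncomputable def conjFn {k : ℕ} (f : Euc k → EReal) (q : Euc k) : ℝ :=
  (⨆ x, ((⟪q, x⟫ : ℝ) : EReal) - f x).toReal

/-- The Fenchel conjugate as an extended real. -/
noncomputable def conjE {k : ℕ} (f : Euc k → EReal) (q : Euc k) : EReal :=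
  ⨆ x, ((⟪q, x⟫ : ℝ) : EReal) - f x

/-- The smoothed conjugate `f_r*(q) = sup_x {⟨q,x⟩ - f(x) - (r/2)‖x‖²}`. -/
noncomputable def conjSm {k : ℕ} (f : Euc k → EReal) (r : ℝ) (q : Euc k) : ℝ :=
  (⨆ x, ((⟪q, x⟫ - r / 2 * ‖x‖ ^ 2 : ℝ) : EReal) - f x).toReal

/-- The proximal objective `x ↦ f(x) + (r/2)‖u - x‖²`. -/
noncomputable def proxObj {k : ℕ} (f : Euc k → EReal) (r : ℝ) (u x : Euc k) : EReal :=
  f x + ((r / 2 * ‖u - x‖ ^ 2 : ℝ) : EReal)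

/-- `D_f = sup {‖x‖²/2 : x ∈ dom f}`. -/
noncomputable def Dsup {k : ℕ} (f : Euc k → EReal) : ℝ :=
  sSup ((fun x : Euc k => ‖x‖ ^ 2 / 2) '' {x | f x ≠ ⊤})

/-- `x0` is the unique global minimizer of `h`. -/
def UniqMin {α : Type*} {β : Type*} [Preorder β] (h : α → β) (x0 : α) : Prop :=
  (∀ x, h x0 ≤ h x) ∧ ∀ x, (∀ y, h x ≤ h y) → x = x0

/-- The dual objective `θ(p) = f*(A*p) + g*(-p)`. -/
noncomputable def theta {n m : ℕ} (f : Euc n → EReal) (g : Euc m → EReal)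
    (A : Euc n →L[ℝ] Euc m) (p : Euc m) : ℝ :=
  conjFn f (ContinuousLinearMap.adjoint A p) + conjFn g (-p)

/-- The singly smoothed dual objective `θ_{ρ,μ}(p) = f_ρ*(A*p) + g_μ*(-p)`. -/
noncomputable def thetaSm {n m : ℕ} (f : Euc n → EReal) (g : Euc m → EReal)
    (A : Euc n →L[ℝ] Euc m) (r s : ℝ) (p : Euc m) : ℝ :=
  conjSm f r (ContinuousLinearMap.adjoint A p) + conjSm g s (-p)

/-- The doubly smoothed dual objective `θ_{ρ,μ,κ}(p) = θ_{ρ,μ}(p) + (κ/2)‖p‖²`. -/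
noncomputable def thetaSmK {n m : ℕ} (f : Euc n → EReal) (g : Euc m → EReal)
    (A : Euc n →L[ℝ] Euc m) (r s c : ℝ) (p : Euc m) : ℝ :=
  thetaSm f g A r s p + c / 2 * ‖p‖ ^ 2

/-- The optimal value of the primal problem `v(P) = inf {f(x) + g(Ax)}`. -/
noncomputable def vPrimal {n m : ℕ} (f : Euc n → EReal) (g : Euc m → EReal)
    (A : Euc n →L[ℝ] Euc m) : EReal := ⨅ x, f x + g (A x)

/-- The optimal value of the dual problem `v(D) = -inf θ`. -/
noncomputable def vDual {n m : ℕ} (f : Euc n → EReal) (g : Euc m → EReal)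
    (A : Euc n →L[ℝ] Euc m) : ℝ := -(⨅ p, theta f g A p)

set_option maxHeartbeats 1000000 in
/-- Decay estimate along the fast gradient method: with
`E = θ_{ρ,μ}(0) - θ_{ρ,μ}(p_DS*)`, if `θ_{ρ,μ,κ}(p) - θ_{ρ,μ,κ}(p_DS*) ≤ E e^{-t}` and
`‖p - p_DS*‖² ≤ min {‖p_DS*‖², (2/κ) E e^{-t}}`, then
`θ_{ρ,μ}(p) - θ_{ρ,μ}(p_DS*) ≤ (25/8) E e^{-t/2}`. -/
theorem stmt12 (n m : ℕ) (f : Euc n → EReal) (g : Euc m → EReal)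
    (A : Euc n →L[ℝ] Euc m) (hf : NiceFn f) (hg : NiceFn g)
    (ρ μ κ : ℝ) (hρ : 0 < ρ) (hμ : 0 < μ) (hκ : 0 < κ)
    (pDS : Euc m) (hpDS : UniqMin (thetaSmK f g A ρ μ κ) pDS)
    (p : Euc m) (t : ℝ) (ht : 0 ≤ t)
    (h1 : thetaSmK f g A ρ μ κ p - thetaSmK f g A ρ μ κ pDS
        ≤ (thetaSm f g A ρ μ 0 - thetaSm f g A ρ μ pDS) * Real.exp (-t))
    (h2 : ‖p - pDS‖ ^ 2 ≤ min (‖pDS‖ ^ 2)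
        (2 / κ * ((thetaSm f g A ρ μ 0 - thetaSm f g A ρ μ pDS) * Real.exp (-t)))) :
    thetaSm f g A ρ μ p - thetaSm f g A ρ μ pDS
      ≤ 25 / 8 * (thetaSm f g A ρ μ 0 - thetaSm f g A ρ μ pDS) * Real.exp (-t / 2) := by
  set E : ℝ := thetaSm f g A ρ μ 0 - thetaSm f g A ρ μ pDS with hEdef
  set q : ℝ := Real.exp (-t / 2) with hqdef
  have hq0 : 0 < q := Real.exp_pos _
  have hq1 : q ≤ 1 := Real.exp_le_one_iff.mpr (by linarith)
  have hqsq : Real.exp (-t) = q ^ 2 := by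
    rw [hqdef, ← Real.exp_nat_mul]; ring_nf
  set a : ℝ := ‖pDS‖ with hadef
  set b : ℝ := ‖p - pDS‖ with hbdef
  clear_value E q
  have ha0 : 0 ≤ a := norm_nonneg _
  have hb0 : 0 ≤ b := norm_nonneg _
  -- p_DS* is no worse than 0 for θ_κ : κ/2 ‖p*‖² ≤ E
  have hmin := hpDS.1 0
  have hE : κ / 2 * a ^ 2 ≤ E := by
    have : thetaSmK f g A ρ μ κ pDS ≤ thetaSm f g A ρ μ 0 := by
      simpa [thetaSmK] using hmin
    simp only [thetaSmK] at this
    simp only [hEdef, hadef]; linarith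
  have hE0 : 0 ≤ E := le_trans (by positivity) hE
  -- b² ≤ (2/κ) E q²
  have h2b : κ * b ^ 2 ≤ 2 * E * q ^ 2 := by
    have := le_trans h2 (min_le_right _ _)
    rw [hqsq] at this
    have h' : κ * b ^ 2 ≤ κ * (2 / κ * (E * q ^ 2)) :=
      mul_le_mul_of_nonneg_left this (le_of_lt hκ)
    calc κ * b ^ 2 ≤ κ * (2 / κ * (E * q ^ 2)) := h'
      _ = 2 * E * q ^ 2 := by field_simp
  -- key : κ a b ≤ 2 E q
  have key : κ * a * b ≤ 2 * E * q := by
    nlinarith [sq_nonneg (a * q - b), mul_pos hκ hq0, sq_nonneg q,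
      mul_le_mul_of_nonneg_right hE (sq_nonneg q), mul_nonneg (mul_nonneg ha0 hb0) hq0.le]
  -- a² - ‖p‖² ≤ 2 a b
  have hnorm : a ^ 2 - ‖p‖ ^ 2 ≤ 2 * a * b := by
    have hsum : pDS + (p - pDS) = p := by abel
    have hexp : ‖p‖ ^ 2 = a ^ 2 + 2 * ⟪pDS, p - pDS⟫ + b ^ 2 := by
      conv_lhs => rw [← hsum, norm_add_sq_real]
    have hcs : |⟪pDS, p - pDS⟫| ≤ a * b := abs_real_inner_le_norm _ _
    have := abs_le.mp hcs
    nlinarith [sq_nonneg b]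
  -- combine
  have h1' : thetaSm f g A ρ μ p - thetaSm f g A ρ μ pDS
      ≤ E * q ^ 2 + κ / 2 * (a ^ 2 - ‖p‖ ^ 2) := by
    simp only [thetaSmK] at h1
    rw [hqsq] at h1
    have : thetaSm f g A ρ μ p + κ / 2 * ‖p‖ ^ 2
        - (thetaSm f g A ρ μ pDS + κ / 2 * a ^ 2) ≤ E * q ^ 2 := h1
    linarith
  have hEq2 : E * q ^ 2 ≤ E * q := by
    calc E * q ^ 2 = E * q * q := by ring
      _ ≤ E * q * 1 := mul_le_mul_of_nonneg_left hq1 (mul_nonneg hE0 hq0.le)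
      _ = E * q := by ring
  have hab : κ / 2 * (a ^ 2 - ‖p‖ ^ 2) ≤ 2 * E * q := by
    have : κ / 2 * (a ^ 2 - ‖p‖ ^ 2) ≤ κ / 2 * (2 * a * b) :=
      mul_le_mul_of_nonneg_left hnorm (by positivity)
    calc κ / 2 * (a ^ 2 - ‖p‖ ^ 2) ≤ κ / 2 * (2 * a * b) := this
      _ = κ * a * b := by ring
      _ ≤ 2 * E * q := key
  calc thetaSm f g A ρ μ p - thetaSm f g A ρ μ pDS
      ≤ E * q ^ 2 + κ / 2 * (a ^ 2 - ‖p‖ ^ 2) := h1'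
    _ ≤ E * q + 2 * E * q := by linarith
    _ ≤ 25 / 8 * E * q := by nlinarith
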